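/- If (A_n) is a Markov sequence of events with P(A_n) → 0, P(A_n) ≠ 1 for all n ≥ N, and ∑_{n=N}^∞ P(A_{n+1} | A_n^c) = ∞, then P(limsup A_n) = 1. -/

import Mathlib

open MeasureTheory Filter

/-- `A` is a Markov sequence of events: the indicators `1_{A n}` form a Markov chain.
Elementary formulation: conditionally on any cylinder event determined by
`A 0, …, A n` (each taken either as itself or its complement), the conditional
probability of `A (n+1)` depends only on the last coordinate. -/
def IsMarkovSeq {Ω : Type*} [MeasurableSpace Ω] (μ : Measure Ω) (A : ℕ → Set Ω) : Prop :=
  ∀ n : ℕ, ∀ B : ℕ → Set Ω, (∀ i, i ≤ n → B i = A i ∨ B i = (A i)ᶜ) →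
    μ (⋂ i ∈ Finset.range (n + 1), B i) ≠ 0 →
    μ (A (n + 1) ∩ ⋂ i ∈ Finset.range (n + 1), B i) * μ (B n)
      = μ (A (n + 1) ∩ B n) * μ (⋂ i ∈ Finset.range (n + 1), B i)

/-- Conditionally on the cylinder `⋂_{i=m}^M (A i)ᶜ`, the probability of `A (M+1)`
equals `P(A (M+1) | (A M)ᶜ)` (multiplicative form). -/
lemma cyl_key {Ω : Type*} [MeasurableSpace Ω] (μ : Measure Ω)
    (A : ℕ → Set Ω) (hmeas : ∀ n, MeasurableSet (A n)) (hMarkov : IsMarkovSeq μ A)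
    {m M : ℕ} (hmM : m ≤ M) :
    μ (A (M+1) ∩ ⋂ i ∈ Finset.Icc m M, (A i)ᶜ) * μ ((A M)ᶜ)
      = μ (A (M+1) ∩ (A M)ᶜ) * μ (⋂ i ∈ Finset.Icc m M, (A i)ᶜ) := by
  classical
  set B : Finset ℕ → ℕ → Set Ω :=
    fun T i => if i < m then (if i ∈ T then A i else (A i)ᶜ) else (A i)ᶜ with hB
  set C : Finset ℕ → Set Ω := fun T => ⋂ i ∈ Finset.range (M+1), B T i with hC
  have hBmeas : ∀ T i, MeasurableSet (B T i) := by
    intro T i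
    simp only [hB]
    split_ifs
    · exact hmeas i
    · exact (hmeas i).compl
    · exact (hmeas i).compl
  have hCmeas : ∀ T, MeasurableSet (C T) :=
    fun T => Finset.measurableSet_biInter _ fun i _ => hBmeas T i
  have hBM : ∀ T, B T M = (A M)ᶜ := by
    intro T; simp only [hB]; rw [if_neg (by omega)]
  have hdisj : Set.PairwiseDisjoint ((Finset.range m).powerset : Set (Finset ℕ)) C := by
    intro T hT T' hT' hne
    obtain ⟨i, hi⟩ := Finset.symmDiff_nonempty.mpr hne
    rw [Finset.mem_symmDiff] at hi
    simp only [Finset.coe_powerset, Set.mem_preimage, Set.mem_powerset_iff,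
      Finset.coe_subset] at hT hT'
    have him : i < m := by
      rcases hi with ⟨h1, _⟩ | ⟨h1, _⟩
      · exact Finset.mem_range.mp (hT h1)
      · exact Finset.mem_range.mp (hT' h1)
    have hiM : i ∈ Finset.range (M+1) := Finset.mem_range.mpr (by omega)
    rw [Function.onFun, Set.disjoint_left]
    intro x hx hx'
    have h1 : x ∈ B T i := Set.mem_iInter₂.mp hx i hiM
    have h2 : x ∈ B T' i := Set.mem_iInter₂.mp hx' i hiM
    simp only [hB, if_pos him] at h1 h2
    rcases hi with ⟨hiT, hiT'⟩ | ⟨hiT', hiT⟩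
    · rw [if_pos hiT] at h1; rw [if_neg hiT'] at h2; exact h2 h1
    · rw [if_neg hiT] at h1; rw [if_pos hiT'] at h2; exact h1 h2
  have hUnion : ⋃ T ∈ (Finset.range m).powerset, C T = ⋂ i ∈ Finset.Icc m M, (A i)ᶜ := by
    ext ω
    constructor
    · intro hω
      obtain ⟨T, _, hωT⟩ := Set.mem_iUnion₂.mp hω
      refine Set.mem_iInter₂.mpr fun i hi => ?_
      rw [Finset.mem_Icc] at hi
      have := Set.mem_iInter₂.mp hωT i (Finset.mem_range.mpr (by omega))
      simpa only [hB, if_neg (by omega : ¬ i < m)] using this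
    · intro hω
      refine Set.mem_iUnion₂.mpr ⟨(Finset.range m).filter (fun i => ω ∈ A i),
        Finset.mem_powerset.mpr (Finset.filter_subset _ _), Set.mem_iInter₂.mpr fun i hi => ?_⟩
      rw [Finset.mem_range] at hi
      by_cases him : i < m
      · simp only [hB, if_pos him, Finset.mem_filter, Finset.mem_range]
        by_cases hA : ω ∈ A i
        · rw [if_pos ⟨him, hA⟩]; exact hA
        · rw [if_neg (by tauto)]; exact hA
      · simp only [hB, if_neg him]
        exact Set.mem_iInter₂.mp hω i (Finset.mem_Icc.mpr ⟨by omega, by omega⟩)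
  have hper : ∀ T ∈ (Finset.range m).powerset,
      μ (A (M+1) ∩ C T) * μ ((A M)ᶜ) = μ (A (M+1) ∩ (A M)ᶜ) * μ (C T) := by
    intro T _
    by_cases h0 : μ (C T) = 0
    · have h1 : μ (A (M+1) ∩ C T) = 0 := measure_mono_null Set.inter_subset_right h0
      rw [h0, h1, zero_mul, mul_zero]
    · have := hMarkov M (B T) (fun i _ => by
        simp only [hB]; split_ifs <;> [exact Or.inl rfl; exact Or.inr rfl; exact Or.inr rfl]) h0
      rwa [hBM T] at this
  have hdisj' : Set.PairwiseDisjoint ((Finset.range m).powerset : Set (Finset ℕ))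
      (fun T => A (M+1) ∩ C T) := fun T hT T' hT' hne =>
    ((hdisj hT hT' hne).mono Set.inter_subset_right Set.inter_subset_right)
  have hE : μ (⋂ i ∈ Finset.Icc m M, (A i)ᶜ)
      = ∑ T ∈ (Finset.range m).powerset, μ (C T) := by
    rw [← hUnion]
    exact measure_biUnion_finset hdisj (fun T _ => hCmeas T)
  have hAE : μ (A (M+1) ∩ ⋂ i ∈ Finset.Icc m M, (A i)ᶜ)
      = ∑ T ∈ (Finset.range m).powerset, μ (A (M+1) ∩ C T) := by
    rw [← hUnion, Set.inter_iUnion₂]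
    exact measure_biUnion_finset hdisj' (fun T _ => (hmeas (M+1)).inter (hCmeas T))
  rw [hE, hAE, Finset.sum_mul, Finset.mul_sum]
  exact Finset.sum_congr rfl hper

/-- The one-step recursion for the measure of the tail cylinders. -/
lemma step_key {Ω : Type*} [MeasurableSpace Ω] (μ : Measure Ω) [IsProbabilityMeasure μ]
    (A : ℕ → Set Ω) (hmeas : ∀ n, MeasurableSet (A n)) (hMarkov : IsMarkovSeq μ A)
    {m M : ℕ} (hmM : m ≤ M) (hMne : μ ((A M)ᶜ) ≠ 0) :
    μ (⋂ i ∈ Finset.Icc m (M+1), (A i)ᶜ)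
      + μ (A (M+1) ∩ (A M)ᶜ) / μ ((A M)ᶜ) * μ (⋂ i ∈ Finset.Icc m M, (A i)ᶜ)
    = μ (⋂ i ∈ Finset.Icc m M, (A i)ᶜ) := by
  have cyl := cyl_key μ A hmeas hMarkov hmM
  set E := ⋂ i ∈ Finset.Icc m M, (A i)ᶜ with hE
  have hTop : μ ((A M)ᶜ) ≠ ⊤ := measure_ne_top μ _
  have hsplit : ⋂ i ∈ Finset.Icc m (M+1), (A i)ᶜ = E \ A (M+1) := by
    rw [← Finset.insert_Icc_right_eq_Icc_add_one (by omega : m ≤ M+1)]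
    rw [Finset.set_biInter_insert, Set.diff_eq, Set.inter_comm, hE]
  have hmain : μ (A (M+1) ∩ E) = μ (A (M+1) ∩ (A M)ᶜ) / μ ((A M)ᶜ) * μ E := by
    have h2 : μ (A (M+1) ∩ E) = μ (A (M + 1) ∩ (A M)ᶜ) * μ E / μ ((A M)ᶜ) :=
      (ENNReal.eq_div_iff hMne hTop).mpr (by rw [mul_comm]; exact cyl)
    rw [h2, ENNReal.div_eq_inv_mul, ENNReal.div_eq_inv_mul]
    ring
  rw [hsplit, ← hmain, ← measure_inter_add_diff E (hmeas (M+1)), Set.inter_comm E, add_comm]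

lemma one_add_sum_le_prod (F : Finset ℕ) (p : ℕ → ENNReal) :
    1 + ∑ k ∈ F, p k ≤ ∏ k ∈ F, (1 + p k) := by
  induction F using Finset.cons_induction with
  | empty => simp
  | cons a F ha ih =>
    rw [Finset.sum_cons, Finset.prod_cons]
    calc 1 + (p a + ∑ k ∈ F, p k) = (1 + ∑ k ∈ F, p k) + p a * 1 := by ring
    _ ≤ (1 + ∑ k ∈ F, p k) + p a * (1 + ∑ k ∈ F, p k) :=
        add_le_add_right (mul_le_mul_right le_self_add _) _
    _ = (1 + p a) * (1 + ∑ k ∈ F, p k) := by ring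
    _ ≤ (1 + p a) * ∏ k ∈ F, (1 + p k) := mul_le_mul_right ih _

/-- The inductive product bound. -/
lemma prod_bound {Ω : Type*} [MeasurableSpace Ω] (μ : Measure Ω) [IsProbabilityMeasure μ]
    (A : ℕ → Set Ω) (hmeas : ∀ n, MeasurableSet (A n)) (hMarkov : IsMarkovSeq μ A)
    (m : ℕ) (hm : ∀ M, m ≤ M → μ ((A M)ᶜ) ≠ 0) (k : ℕ) :
    μ (⋂ i ∈ Finset.Icc m (m+k), (A i)ᶜ)
      * ∏ j ∈ Finset.Ico m (m+k), (1 + μ (A (j+1) ∩ (A j)ᶜ) / μ ((A j)ᶜ)) ≤ 1 := by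
  induction k with
  | zero =>
    rw [Nat.add_zero, Finset.Ico_self, Finset.prod_empty, mul_one]
    exact prob_le_one
  | succ k ih =>
    have hmono : μ (⋂ i ∈ Finset.Icc m (m+k+1), (A i)ᶜ) ≤ μ (⋂ i ∈ Finset.Icc m (m+k), (A i)ᶜ) := by
      refine measure_mono (Set.subset_iInter₂ fun i hi => ?_)
      refine Set.biInter_subset_of_mem (?_ : i ∈ Finset.Icc m (m+k+1))
      rw [Finset.mem_Icc] at hi ⊢
      omega
    have hstep : μ (⋂ i ∈ Finset.Icc m (m+k+1), (A i)ᶜ)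
        * (1 + μ (A (m+k+1) ∩ (A (m+k))ᶜ) / μ ((A (m+k))ᶜ))
        ≤ μ (⋂ i ∈ Finset.Icc m (m+k), (A i)ᶜ) := by
      rw [mul_add, mul_one]
      calc μ (⋂ i ∈ Finset.Icc m (m+k+1), (A i)ᶜ)
            + μ (⋂ i ∈ Finset.Icc m (m+k+1), (A i)ᶜ) * (μ (A (m+k+1) ∩ (A (m+k))ᶜ) / μ ((A (m+k))ᶜ))
          ≤ μ (⋂ i ∈ Finset.Icc m (m+k+1), (A i)ᶜ)
            + μ (A (m+k+1) ∩ (A (m+k))ᶜ) / μ ((A (m+k))ᶜ) * μ (⋂ i ∈ Finset.Icc m (m+k), (A i)ᶜ) := by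
            rw [mul_comm (μ (A (m+k+1) ∩ (A (m+k))ᶜ) / μ ((A (m+k))ᶜ))]
            exact add_le_add_right (mul_le_mul_left hmono _) _
        _ = μ (⋂ i ∈ Finset.Icc m (m+k), (A i)ᶜ) :=
            step_key μ A hmeas hMarkov (by omega) (hm (m+k) (by omega))
    rw [show m + (k+1) = (m+k)+1 from rfl,
      Finset.prod_Ico_succ_top (Nat.le_add_right m k), ← mul_assoc, mul_right_comm]
    exact le_trans (mul_le_mul_left hstep _) ih

theorem stmt3 {Ω : Type*} [MeasurableSpace Ω] (μ : Measure Ω) [IsProbabilityMeasure μ]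
    (A : ℕ → Set Ω) (hmeas : ∀ n, MeasurableSet (A n))
    (hMarkov : IsMarkovSeq μ A)
    (h0 : Tendsto (fun n => μ (A n)) atTop (nhds 0))
    (N : ℕ) (hN : ∀ n, N ≤ n → μ (A n) ≠ 1)
    (hsum : ∑' n : ℕ, μ (A (N + n + 1) ∩ (A (N + n))ᶜ) / μ ((A (N + n))ᶜ) = ⊤) :
    μ (limsup A atTop) = 1 := by
  classical
  set p : ℕ → ENNReal := fun j => μ (A (j+1) ∩ (A j)ᶜ) / μ ((A j)ᶜ) with hp
  -- complements of events with measure ≠ 1 have positive measure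
  have hcne : ∀ M, N ≤ M → μ ((A M)ᶜ) ≠ 0 := by
    intro M hM h
    exact hN M hM ((prob_compl_eq_zero_iff (hmeas M)).mp h)
  -- each p is at most 1 beyond N
  have hple : ∀ j, N ≤ j → p j ≤ 1 := by
    intro j hj
    rw [hp]
    rw [ENNReal.div_le_iff (hcne j hj) (measure_ne_top μ _), one_mul]
    exact measure_mono Set.inter_subset_right
  -- divergence of the partial sums from any point `m ≥ N`
  have hdiv : ∀ m, N ≤ m → (⨆ k : ℕ, ∑ j ∈ Finset.Ico m (m + k), p j) = ⊤ := by
    intro m hm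
    by_contra h
    have hS : (⨆ k : ℕ, ∑ j ∈ Finset.Ico m (m + k), p j) ≠ ⊤ := h
    have hfin : ∑ j ∈ Finset.Ico N m, p j ≤ (Finset.Ico N m).card • (1 : ENNReal) :=
      Finset.sum_le_card_nsmul _ _ _ (fun j hj => hple j (Finset.mem_Ico.mp hj).1)
    have hfin' : ∑ j ∈ Finset.Ico N m, p j ≠ ⊤ :=
      ne_top_of_le_ne_top (by simp) hfin
    have hbound : ∀ M : ℕ, ∑ j ∈ Finset.range M, p (N + j)
        ≤ ∑ j ∈ Finset.Ico N m, p j + ⨆ k : ℕ, ∑ j ∈ Finset.Ico m (m + k), p j := by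
      intro M
      have hr : ∑ j ∈ Finset.Ico N (N+M), p j = ∑ j ∈ Finset.range M, p (N + j) := by
        rw [Finset.sum_Ico_eq_sum_range]
        simp
      rw [← hr]
      by_cases hMm : N + M ≤ m
      · calc ∑ j ∈ Finset.Ico N (N + M), p j ≤ ∑ j ∈ Finset.Ico N m, p j :=
              Finset.sum_le_sum_of_subset (Finset.Ico_subset_Ico le_rfl hMm)
          _ ≤ _ := le_self_add
      · push_neg at hMm
        rw [← Finset.sum_Ico_consecutive (fun j => p j) hm (by omega : m ≤ N + M)]
        refine add_le_add_right ?_ _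
        have : ∑ j ∈ Finset.Ico m (N + M), p j
            = ∑ j ∈ Finset.Ico m (m + (N + M - m)), p j := by
          congr 1
          congr 1
          omega
        rw [this]
        exact le_iSup (fun k : ℕ => ∑ j ∈ Finset.Ico m (m + k), p j) (N + M - m)
    have htop : (⊤ : ENNReal) ≤ ∑ j ∈ Finset.Ico N m, p j
        + ⨆ k : ℕ, ∑ j ∈ Finset.Ico m (m + k), p j := by
      rw [← hsum, ENNReal.tsum_eq_iSup_nat]
      exact iSup_le hbound
    exact (ENNReal.add_ne_top.mpr ⟨hfin', hS⟩) (top_le_iff.mp htop)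
  -- each tail intersection is null
  have htail : ∀ n : ℕ, μ (⋂ i : ℕ, (A (i + n))ᶜ) = 0 := by
    intro n
    set m : ℕ := max n N with hm
    have hmN : N ≤ m := le_max_right n N
    set T : Set Ω := ⋂ i : ℕ, (A (i + n))ᶜ with hT
    have hTsub : ∀ k : ℕ, T ⊆ ⋂ i ∈ Finset.Icc m (m + k), (A i)ᶜ := by
      intro k
      refine Set.subset_iInter₂ fun i hi => ?_
      rw [Finset.mem_Icc] at hi
      have : i = (i - n) + n := by omega
      rw [this]
      exact Set.iInter_subset _ (i - n)
    have hkey : ∀ k : ℕ, μ T * (1 + ∑ j ∈ Finset.Ico m (m + k), p j) ≤ 1 := by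
      intro k
      calc μ T * (1 + ∑ j ∈ Finset.Ico m (m + k), p j)
          ≤ μ (⋂ i ∈ Finset.Icc m (m + k), (A i)ᶜ)
            * ∏ j ∈ Finset.Ico m (m + k), (1 + p j) :=
            mul_le_mul' (measure_mono (hTsub k)) (one_add_sum_le_prod _ _)
        _ ≤ 1 := prod_bound μ A hmeas hMarkov m (fun M hM => hcne M (le_trans hmN hM)) k
    by_contra hT0
    have hinv : (μ T)⁻¹ < ⊤ := by
      simp [ENNReal.inv_lt_top, pos_iff_ne_zero, hT0]
    obtain ⟨k, hk⟩ := lt_iSup_iff.mp (by rw [hdiv m hmN]; exact hinv)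
    have h1 : μ T + 1 ≤ 1 := by
      calc μ T + 1 = μ T * (1 + (μ T)⁻¹) := by
            rw [mul_add, mul_one, ENNReal.mul_inv_cancel hT0 (measure_ne_top μ _), add_comm]
        _ ≤ μ T * (1 + ∑ j ∈ Finset.Ico m (m + k), p j) :=
            mul_le_mul_right (add_le_add_right hk.le _) _
        _ ≤ 1 := hkey k
    have : μ T ≤ 0 := by
      have h2 : μ T + 1 - 1 ≤ 1 - 1 := tsub_le_tsub_right h1 1
      rwa [ENNReal.add_sub_cancel_right ENNReal.one_ne_top, tsub_self] at h2
    exact hT0 (le_antisymm this zero_le)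
  -- conclude
  have hcompl : μ ((limsup A atTop)ᶜ) = 0 := by
    have hls : (limsup A atTop)ᶜ = ⋃ n : ℕ, ⋂ i : ℕ, (A (i + n))ᶜ := by
      rw [limsup_eq_iInf_iSup_of_nat']
      ext ω
      simp
    rw [hls]
    exact measure_iUnion_null htail
  exact (prob_compl_eq_zero_iff (MeasurableSet.measurableSet_limsup hmeas)).mp hcompl
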